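/- For every positive integer n and every real x > 0, F(x) - ∑_{k=1}^{n} (-1)^{k-1}(k-1)! x^{-k} = O(x^{-(n+1)}) as x → ∞, where F(x) = ∫_0^∞ e^{-t}/(t+x) dt. -/

import Mathlib

noncomputable def F (x : ℝ) : ℝ := ∫ t in Set.Ioi (0:ℝ), Real.exp (-t) / (t + x)

open MeasureTheory Set Filter

lemma int_exp_pow (m : ℕ) :
    IntegrableOn (fun t : ℝ => Real.exp (-t) * t ^ m) (Ioi 0) := by
  have h := Real.GammaIntegral_convergent (s := (m + 1 : ℝ)) (by positivity)
  refine h.congr_fun ?_ measurableSet_Ioi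
  intro t ht
  simp [show ((m:ℝ) + 1) - 1 = (m : ℝ) by ring, Real.rpow_natCast]

lemma int_exp_pow_eq (m : ℕ) :
    ∫ t in Ioi (0:ℝ), Real.exp (-t) * t ^ m = m.factorial := by
  have h1 := (Real.Gamma_eq_integral (s := (m+1:ℝ)) (by positivity)).symm
  rw [setIntegral_congr_fun measurableSet_Ioi
    (g := fun t : ℝ => Real.exp (-t) * t ^ (((m:ℝ)+1)-1)) ?_, h1,
    show ((m:ℝ)+1) = ((m:ℕ):ℝ) + 1 by norm_num, Real.Gamma_nat_eq_factorial]
  intro t ht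
  simp [show ((m:ℝ) + 1) - 1 = (m : ℝ) by ring, Real.rpow_natCast]

lemma int_rem (m : ℕ) (x : ℝ) (hx : 0 < x) :
    IntegrableOn (fun t : ℝ => Real.exp (-t) * t ^ m / (t + x)) (Ioi 0) := by
  refine Integrable.mono' ((int_exp_pow m).div_const x) ?_ ?_
  · refine ContinuousOn.aestronglyMeasurable ?_ measurableSet_Ioi
    refine ContinuousOn.div ?_ ?_ ?_
    · exact ((Real.continuous_exp.comp continuous_neg).mul (continuous_pow m)).continuousOn
    · exact (continuous_add_right x).continuousOn
    · intro t ht; have : (0:ℝ) < t := ht; positivity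
  · filter_upwards [ae_restrict_mem measurableSet_Ioi] with t ht
    have ht' : (0:ℝ) < t := ht
    rw [Real.norm_eq_abs, abs_of_nonneg (by positivity)]
    exact div_le_div_of_nonneg_left (by positivity) hx (by linarith)

lemma pointwise (n : ℕ) (x t : ℝ) (hx : 0 < x) (ht : 0 < t) :
    Real.exp (-t) / (t + x)
      = (∑ k ∈ Finset.Icc 1 n, (-1:ℝ)^(k-1) * x⁻¹^k * (Real.exp (-t) * t^(k-1)))
        + (-1:ℝ)^n * x⁻¹^n * (Real.exp (-t) * t^n / (t + x)) := by
  induction n with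
  | zero => simp
  | succ m ih =>
    rw [Finset.sum_Icc_succ_top (by omega), ih]
    have htx : t + x ≠ 0 := by positivity
    have hx' : x ≠ 0 := hx.ne'
    simp only [Nat.add_sub_cancel]
    field_simp
    linear_combination (norm := ring_nf) (-(x⁻¹ ^ m * t ^ m * Real.exp (-t) * (-1:ℝ) ^ m)) * mul_inv_cancel₀ hx'

open Filter in
theorem stmt_0 (n : ℕ) (hn : 1 ≤ n) :
    (fun x : ℝ => F x - ∑ k ∈ Finset.Icc 1 n, (-1 : ℝ) ^ (k - 1) * (Nat.factorial (k - 1)) * x⁻¹ ^ k)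
      =O[atTop] fun x : ℝ => x⁻¹ ^ (n + 1) := by
  rw [Asymptotics.isBigO_iff]
  refine ⟨n.factorial, ?_⟩
  filter_upwards [eventually_gt_atTop (0:ℝ)] with x hx
  -- compute F x
  have hkey : F x - (∑ k ∈ Finset.Icc 1 n, (-1 : ℝ) ^ (k - 1) * (Nat.factorial (k - 1)) * x⁻¹ ^ k)
      = (-1:ℝ)^n * x⁻¹^n * ∫ t in Ioi (0:ℝ), Real.exp (-t) * t^n / (t + x) := by
    have hF : F x = (∑ k ∈ Finset.Icc 1 n, (-1:ℝ)^(k-1) * x⁻¹^k * (Nat.factorial (k-1)))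
        + (-1:ℝ)^n * x⁻¹^n * ∫ t in Ioi (0:ℝ), Real.exp (-t) * t^n / (t + x) := by
      have h1 : F x = ∫ t in Ioi (0:ℝ),
          ((∑ k ∈ Finset.Icc 1 n, (-1:ℝ)^(k-1) * x⁻¹^k * (Real.exp (-t) * t^(k-1)))
            + (-1:ℝ)^n * x⁻¹^n * (Real.exp (-t) * t^n / (t + x))) := by
        refine setIntegral_congr_fun measurableSet_Ioi fun t ht => ?_
        exact pointwise n x t hx ht
      rw [h1, integral_add, integral_finset_sum]
      · congr 1
        · refine Finset.sum_congr rfl fun k hk => ?_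
          rw [integral_const_mul, int_exp_pow_eq]
        · rw [integral_const_mul]
      · intro k hk
        exact ((int_exp_pow (k-1)).const_mul _)
      · exact integrable_finset_sum _ fun k hk => ((int_exp_pow (k-1)).const_mul _)
      · exact ((int_rem n x hx).const_mul _)
    rw [hF, show (∑ k ∈ Finset.Icc 1 n, (-1:ℝ)^(k-1) * x⁻¹^k * (Nat.factorial (k-1)))
        = ∑ k ∈ Finset.Icc 1 n, (-1 : ℝ) ^ (k - 1) * (Nat.factorial (k - 1)) * x⁻¹ ^ k from
      Finset.sum_congr rfl fun k _ => by ring]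
    ring
  rw [hkey]
  have hbound : ∫ t in Ioi (0:ℝ), Real.exp (-t) * t^n / (t + x)
      ≤ n.factorial * x⁻¹ := by
    have h2 : ∫ t in Ioi (0:ℝ), Real.exp (-t) * t^n / (t + x)
        ≤ ∫ t in Ioi (0:ℝ), Real.exp (-t) * t^n / x := by
      refine setIntegral_mono_on (int_rem n x hx) ((int_exp_pow n).div_const x)
        measurableSet_Ioi fun t ht => ?_
      have ht' : (0:ℝ) < t := ht
      exact div_le_div_of_nonneg_left (by positivity) hx (by linarith)
    calc _ ≤ ∫ t in Ioi (0:ℝ), Real.exp (-t) * t^n / x := h2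
      _ = (∫ t in Ioi (0:ℝ), Real.exp (-t) * t^n) / x := integral_div x _
      _ = n.factorial * x⁻¹ := by rw [int_exp_pow_eq]; ring
  have hnonneg : 0 ≤ ∫ t in Ioi (0:ℝ), Real.exp (-t) * t^n / (t + x) := by
    refine setIntegral_nonneg measurableSet_Ioi fun t ht => ?_
    have ht' : (0:ℝ) < t := ht
    positivity
  rw [Real.norm_eq_abs, Real.norm_eq_abs, abs_of_nonneg (by positivity : (0:ℝ) ≤ x⁻¹^(n+1)),
    abs_mul, abs_mul, abs_pow, abs_pow, abs_neg, abs_one, one_pow, one_mul,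
    abs_of_nonneg hnonneg, abs_of_nonneg (inv_nonneg.mpr hx.le)]
  calc x⁻¹^n * ∫ t in Ioi (0:ℝ), Real.exp (-t) * t^n / (t + x)
      ≤ x⁻¹^n * (n.factorial * x⁻¹) := by
        exact mul_le_mul_of_nonneg_left hbound (by positivity)
    _ = n.factorial * x⁻¹^(n+1) := by ring
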